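/- Suppose 0 < ε ≤ 1/2, so that α = (1−2ε)/(1−ε) ∈ [0,1). Set C₄ = 2/(1−α) = 2(1−ε)/ε and C₅ = (1+α)/2. Then for every n ≥ 1, every action sequence i_{1:n} ∈ {1,…,I}^n, every pair of beliefs b¹, b² ∈ B, and every function f : B → ℝ satisfying |f(b) − f(b′)| ≤ ‖b − b′‖₁ for all b, b′ ∈ B and sup_{b∈B} |f(b)| ≤ 1, one has | Σ_{r_{1:n} ∈ {0,1}^n} f(H^{(n)}(b¹, i_{1:n}, r_{1:n}))·Q^{(n)}(r_{1:n}|b¹, i_{1:n}) − Σ_{r_{1:n} ∈ {0,1}^n} f(H^{(n)}(b², i_{1:n}, r_{1:n}))·Q^{(n)}(r_{1:n}|b², i_{1:n}) | ≤ (C₄·α^n + C₅)·‖b¹ − b²‖₁. In particular, the n-step belief transition kernel is Lipschitz in the initial belief, uniformly over action sequences, with Lipschitz module at most C₄α^n + C₅. -/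

import Mathlib

open Finset

/-- Membership in the belief simplex `B`. -/
def IsBelief {M : ℕ} (b : Fin M → ℝ) : Prop :=
  (∀ m, 0 ≤ b m) ∧ ∑ m, b m = 1

/-- ℓ¹ distance between two vectors. -/
noncomputable def l1 {M : ℕ} (b b' : Fin M → ℝ) : ℝ :=
  ∑ m, |b m - b' m|

/-- A row-stochastic matrix. -/
def RowStochastic {M : ℕ} (P : Fin M → Fin M → ℝ) : Prop :=
  (∀ m m', 0 ≤ P m m') ∧ ∀ m, ∑ m', P m m' = 1

/-- Bernoulli likelihood `p^r (1-p)^(1-r)` for `r ∈ {0,1}` (encoded as `Bool`). -/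
noncomputable def bern (p : ℝ) (r : Bool) : ℝ :=
  if r then p else 1 - p

/-- Bayesian belief update `H(b, i, r)`. -/
noncomputable def Hupd {M I : ℕ} (P : Fin M → Fin M → ℝ) (μ : Fin M → Fin I → ℝ)
    (b : Fin M → ℝ) (i : Fin I) (r : Bool) : Fin M → ℝ :=
  fun m => (∑ m', P m' m * (bern (μ m' i) r * b m')) /
    (∑ m'', bern (μ m'' i) r * b m'')

/-- Probability `p(r | b, i)` of observing reward `r` under belief `b` pulling arm `i`. -/
noncomputable def pObs {M I : ℕ} (μ : Fin M → Fin I → ℝ)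
    (b : Fin M → ℝ) (i : Fin I) (r : Bool) : ℝ :=
  ∑ m, bern (μ m i) r * b m

/-- `n`-step iterated Bayesian belief update `H^(n)(b, i_{1:n}, r_{1:n})`. -/
noncomputable def Hiter {M I : ℕ} (P : Fin M → Fin M → ℝ) (μ : Fin M → Fin I → ℝ) :
    (n : ℕ) → (Fin M → ℝ) → (Fin n → Fin I) → (Fin n → Bool) → (Fin M → ℝ)
  | 0, b, _, _ => b
  | n + 1, b, is, rs =>
      Hiter P μ n (Hupd P μ b (is 0) (rs 0)) (fun t => is t.succ) (fun t => rs t.succ)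

/-- Law `L(r_{1:n+1} | m, i_{1:n+1})` of a reward sequence of length `n+1`
given the initial hidden state `m`. -/
noncomputable def law {M I : ℕ} (P : Fin M → Fin M → ℝ) (μ : Fin M → Fin I → ℝ) :
    (n : ℕ) → Fin M → (Fin (n + 1) → Fin I) → (Fin (n + 1) → Bool) → ℝ
  | 0, m, is, rs => bern (μ m (is 0)) (rs 0)
  | n + 1, m, is, rs =>
      bern (μ m (is 0)) (rs 0) *
        ∑ m', P m m' * law P μ n m' (fun t => is t.succ) (fun t => rs t.succ)

/-- Law `Q^(n+1)(r_{1:n+1} | b, i_{1:n+1})` of a reward sequence of length `n+1`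
given the initial belief `b`. -/
noncomputable def Qlaw {M I : ℕ} (P : Fin M → Fin M → ℝ) (μ : Fin M → Fin I → ℝ)
    (n : ℕ) (b : Fin M → ℝ) (is : Fin (n + 1) → Fin I) (rs : Fin (n + 1) → Bool) : ℝ :=
  ∑ m, b m * law P μ n m is rs

/-! ### Auxiliary lemmas -/

section Aux

variable {M I : ℕ} {P : Fin M → Fin M → ℝ} {μ : Fin M → Fin I → ℝ}

lemma NKL.bern_mem {p : ℝ} (hp : p ∈ Set.Ioo (0:ℝ) 1) (r : Bool) :
    bern p r ∈ Set.Ioo (0:ℝ) 1 := by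
  obtain ⟨h1, h2⟩ := hp
  cases r <;> simp [bern] <;> constructor <;> linarith

lemma NKL.sum_split (n : ℕ) (F : (Fin (n+1) → Bool) → ℝ) :
    ∑ rs : Fin (n+1) → Bool, F rs
      = ∑ r : Bool, ∑ rs' : Fin n → Bool, F (Fin.cons r rs') := by
  rw [← (Fin.consEquiv (fun _ : Fin (n+1) => Bool)).sum_comp, Fintype.sum_prod_type]
  rfl

lemma NKL.cons_tail {n : ℕ} (r : Bool) (rs' : Fin n → Bool) :
    (fun t : Fin n => (Fin.cons r rs' : Fin (n+1) → Bool) t.succ) = rs' := by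
  funext t; simp

lemma NKL.law_pos (hM : 0 < M) (hPpos : ∀ m m', 0 < P m m')
    (hμ : ∀ m i, μ m i ∈ Set.Ioo (0:ℝ) 1) :
    ∀ (n : ℕ) (m : Fin M) (is : Fin (n+1) → Fin I) (rs : Fin (n+1) → Bool),
      0 < law P μ n m is rs := by
  intro n
  induction n with
  | zero => intro m is rs; exact (NKL.bern_mem (hμ m (is 0)) (rs 0)).1
  | succ n ih =>
    intro m is rs
    have h1 : (0:ℝ) < ∑ m', P m m' * law P μ n m' (fun t => is t.succ) (fun t => rs t.succ) := by
      apply Finset.sum_pos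
      · intro m' _
        exact mul_pos (hPpos m m') (ih m' _ _)
      · have : Nonempty (Fin M) := Fin.pos_iff_nonempty.mp hM
        exact Finset.univ_nonempty
    exact mul_pos (NKL.bern_mem (hμ m (is 0)) (rs 0)).1 h1

lemma NKL.law_sum_one (hProw : ∀ m, ∑ m', P m m' = 1) :
    ∀ (n : ℕ) (m : Fin M) (is : Fin (n+1) → Fin I),
      ∑ rs : Fin (n+1) → Bool, law P μ n m is rs = 1 := by
  intro n
  induction n with
  | zero =>
    intro m is
    rw [NKL.sum_split]
    simp [law, bern]
  | succ n ih =>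
    intro m is
    rw [NKL.sum_split]
    have : ∀ r : Bool, ∑ rs' : Fin (n+1) → Bool,
        law P μ (n+1) m is (Fin.cons r rs') = bern (μ m (is 0)) r := by
      intro r
      have heach : ∀ rs' : Fin (n+1) → Bool,
          law P μ (n+1) m is (Fin.cons r rs')
            = bern (μ m (is 0)) r *
              ∑ m', P m m' * law P μ n m' (fun t => is t.succ) rs' := by
        intro rs'
        show bern (μ m (is 0)) ((Fin.cons r rs' : Fin (n+2) → Bool) 0) * _ = _
        rw [Fin.cons_zero, NKL.cons_tail]
      rw [Finset.sum_congr rfl (fun rs' _ => heach rs')]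
      rw [← Finset.mul_sum, Finset.sum_comm]
      have : ∀ m' : Fin M, ∑ rs' : Fin (n+1) → Bool,
          P m m' * law P μ n m' (fun t => is t.succ) rs' = P m m' := by
        intro m'
        rw [← Finset.mul_sum, ih m' _, mul_one]
      rw [Finset.sum_congr rfl (fun m' _ => this m'), hProw, mul_one]
    rw [Finset.sum_congr rfl (fun r _ => this r)]
    simp [bern]

end Aux

section Aux2

variable {M I : ℕ} {P : Fin M → Fin M → ℝ} {μ : Fin M → Fin I → ℝ}

lemma NKL.sum_mul_pos {b c : Fin M → ℝ} (hb : IsBelief b) (hc : ∀ m, 0 < c m) :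
    0 < ∑ m, b m * c m := by
  rcases lt_or_eq_of_le (Finset.sum_nonneg (fun m _ => mul_nonneg (hb.1 m) (hc m).le)) with h | h
  · exact h
  · exfalso
    have hall := (Finset.sum_eq_zero_iff_of_nonneg
      (fun m _ => mul_nonneg (hb.1 m) (hc m).le)).mp h.symm
    have : ∑ m, b m = 0 := by
      apply Finset.sum_eq_zero
      intro m _
      have := hall m (Finset.mem_univ m)
      rcases mul_eq_zero.mp this with h' | h'
      · exact h'
      · exact absurd h' (hc m).ne'
    rw [hb.2] at this; norm_num at this

lemma NKL.pObs_pos {b : Fin M → ℝ} (hb : IsBelief b)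
    (hμ : ∀ m i, μ m i ∈ Set.Ioo (0:ℝ) 1) (i : Fin I) (r : Bool) :
    0 < ∑ m'', bern (μ m'' i) r * b m'' := by
  have := NKL.sum_mul_pos (c := fun m => bern (μ m i) r) hb
    (fun m => (NKL.bern_mem (hμ m i) r).1)
  calc (0:ℝ) < ∑ m, b m * bern (μ m i) r := this
    _ = ∑ m'', bern (μ m'' i) r * b m'' := by
        exact Finset.sum_congr rfl (fun m _ => mul_comm _ _)

lemma NKL.Hupd_isBelief (hP : RowStochastic P) (hμ : ∀ m i, μ m i ∈ Set.Ioo (0:ℝ) 1)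
    {b : Fin M → ℝ} (hb : IsBelief b) (i : Fin I) (r : Bool) :
    IsBelief (Hupd P μ b i r) := by
  have hs := NKL.pObs_pos hb hμ i r
  constructor
  · intro m
    apply div_nonneg _ hs.le
    exact Finset.sum_nonneg fun m' _ => mul_nonneg (hP.1 m' m)
      (mul_nonneg (NKL.bern_mem (hμ m' i) r).1.le (hb.1 m'))
  · unfold Hupd
    rw [← Finset.sum_div]
    rw [Finset.sum_comm]
    have : ∀ m', ∑ m, P m' m * (bern (μ m' i) r * b m') = bern (μ m' i) r * b m' := by
      intro m'
      rw [← Finset.sum_mul, hP.2 m', one_mul]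
    rw [Finset.sum_congr rfl (fun m' _ => this m')]
    exact div_self hs.ne'

lemma NKL.Hiter_isBelief (hP : RowStochastic P) (hμ : ∀ m i, μ m i ∈ Set.Ioo (0:ℝ) 1) :
    ∀ (n : ℕ) {b : Fin M → ℝ} (_ : IsBelief b) (is : Fin n → Fin I) (rs : Fin n → Bool),
      IsBelief (Hiter P μ n b is rs) := by
  intro n
  induction n with
  | zero => intro b hb is rs; exact hb
  | succ n ih =>
    intro b hb is rs
    exact ih (NKL.Hupd_isBelief hP hμ hb (is 0) (rs 0)) _ _

lemma NKL.Qlaw_pos (hM : 0 < M) (hPpos : ∀ m m', 0 < P m m')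
    (hμ : ∀ m i, μ m i ∈ Set.Ioo (0:ℝ) 1) {b : Fin M → ℝ} (hb : IsBelief b)
    (n : ℕ) (is : Fin (n+1) → Fin I) (rs : Fin (n+1) → Bool) :
    0 < Qlaw P μ n b is rs :=
  NKL.sum_mul_pos hb (fun m => NKL.law_pos hM hPpos hμ n m is rs)

/-- posterior over the initial state given rewards, as a belief. -/
noncomputable def NKL.post (P : Fin M → Fin M → ℝ) (μ : Fin M → Fin I → ℝ)
    (n : ℕ) (b : Fin M → ℝ) (is : Fin (n + 1) → Fin I) (rs : Fin (n + 1) → Bool) :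
    Fin M → ℝ :=
  fun m => b m * law P μ n m is rs / Qlaw P μ n b is rs

lemma NKL.post_isBelief (hM : 0 < M) (hPpos : ∀ m m', 0 < P m m')
    (hμ : ∀ m i, μ m i ∈ Set.Ioo (0:ℝ) 1) {b : Fin M → ℝ} (hb : IsBelief b)
    (n : ℕ) (is : Fin (n+1) → Fin I) (rs : Fin (n+1) → Bool) :
    IsBelief (NKL.post P μ n b is rs) := by
  have hQ := NKL.Qlaw_pos hM hPpos hμ hb n is rs
  constructor
  · intro m
    exact div_nonneg (mul_nonneg (hb.1 m) (NKL.law_pos hM hPpos hμ n m is rs).le) hQ.le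
  · unfold NKL.post
    rw [← Finset.sum_div]
    exact div_self hQ.ne'

lemma NKL.l1_le_two {b b' : Fin M → ℝ} (hb : IsBelief b) (hb' : IsBelief b') :
    l1 b b' ≤ 2 := by
  unfold l1
  calc ∑ m, |b m - b' m| ≤ ∑ m, (b m + b' m) := by
        apply Finset.sum_le_sum
        intro m _
        rw [abs_sub_le_iff]
        constructor <;> nlinarith [hb.1 m, hb'.1 m]
    _ = 2 := by rw [Finset.sum_add_distrib, hb.2, hb'.2]; norm_num

lemma NKL.l1_nonneg (b b' : Fin M → ℝ) : 0 ≤ l1 b b' :=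
  Finset.sum_nonneg fun m _ => abs_nonneg _

/-- Dobrushin-type contraction. -/
lemma NKL.dob (K : Fin M → Fin M → ℝ) (γ z : Fin M → ℝ)
    (hK : ∀ m m', γ m' ≤ K m m') (hrow : ∀ m, ∑ m', K m m' = 1)
    (hz : ∑ m, z m = 0) :
    ∑ m', |∑ m, z m * K m m'| ≤ (1 - ∑ m', γ m') * ∑ m, |z m| := by
  have key : ∀ m', ∑ m, z m * K m m' = ∑ m, z m * (K m m' - γ m') := by
    intro m'
    rw [Finset.sum_congr rfl (fun m _ => by ring_nf :
      ∀ m ∈ Finset.univ, z m * (K m m' - γ m') = z m * K m m' - z m * γ m')]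
    rw [Finset.sum_sub_distrib, ← Finset.sum_mul, hz, zero_mul, sub_zero]
  calc ∑ m', |∑ m, z m * K m m'|
      ≤ ∑ m', ∑ m, |z m| * (K m m' - γ m') := by
        apply Finset.sum_le_sum
        intro m' _
        rw [key m']
        refine le_trans (Finset.abs_sum_le_sum_abs _ _) ?_
        apply Finset.sum_le_sum
        intro m _
        rw [abs_mul, abs_of_nonneg (show (0:ℝ) ≤ K m m' - γ m' by linarith [hK m m'])]
    _ = ∑ m, |z m| * (1 - ∑ m', γ m') := by
        rw [Finset.sum_comm]
        apply Finset.sum_congr rfl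
        intro m _
        rw [← Finset.mul_sum, Finset.sum_sub_distrib, hrow m]
    _ = (1 - ∑ m', γ m') * ∑ m, |z m| := by rw [← Finset.sum_mul, mul_comm]

end Aux2

section Aux3

variable {M I : ℕ} {P : Fin M → Fin M → ℝ} {μ : Fin M → Fin I → ℝ}

lemma NKL.Hupd_post0 (hM : 0 < M) (hPpos : ∀ m m', 0 < P m m')
    (hμ : ∀ m i, μ m i ∈ Set.Ioo (0:ℝ) 1) {b : Fin M → ℝ} (hb : IsBelief b)
    (is : Fin 1 → Fin I) (rs : Fin 1 → Bool) (m' : Fin M) :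
    Hupd P μ b (is 0) (rs 0) m' = ∑ m, NKL.post P μ 0 b is rs m * P m m' := by
  have hlaw0 : ∀ m : Fin M, law P μ 0 m is rs = bern (μ m (is 0)) (rs 0) := fun _ => rfl
  have hQs : Qlaw P μ 0 b is rs = ∑ m'', bern (μ m'' (is 0)) (rs 0) * b m'' := by
    unfold Qlaw
    exact Finset.sum_congr rfl (fun m _ => by rw [hlaw0 m]; ring)
  unfold NKL.post Hupd
  rw [Finset.sum_div]
  apply Finset.sum_congr rfl
  intro m _
  rw [hlaw0 m, hQs]
  ring

lemma NKL.post_step (hM : 0 < M) (hP : RowStochastic P) (hPpos : ∀ m m', 0 < P m m')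
    (hμ : ∀ m i, μ m i ∈ Set.Ioo (0:ℝ) 1) {b : Fin M → ℝ} (hb : IsBelief b)
    (n : ℕ) (is : Fin (n+2) → Fin I) (rs : Fin (n+2) → Bool) (m' : Fin M) :
    NKL.post P μ n (Hupd P μ b (is 0) (rs 0)) (fun t => is t.succ) (fun t => rs t.succ) m'
      = ∑ m, NKL.post P μ (n+1) b is rs m *
          (P m m' * law P μ n m' (fun t => is t.succ) (fun t => rs t.succ) /
            ∑ k, P m k * law P μ n k (fun t => is t.succ) (fun t => rs t.succ)) := by
  set i₀ := is 0
  set r₀ := rs 0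
  set is' : Fin (n+1) → Fin I := fun t => is t.succ with his'
  set rs' : Fin (n+1) → Bool := fun t => rs t.succ with hrs'
  set w : Fin M → ℝ := fun k => law P μ n k is' rs' with hw
  have hwpos : ∀ k, 0 < w k := fun k => NKL.law_pos hM hPpos hμ n k is' rs'
  set W : Fin M → ℝ := fun m => ∑ k, P m k * w k with hW
  have hWpos : ∀ m, 0 < W m := by
    intro m
    have : Nonempty (Fin M) := Fin.pos_iff_nonempty.mp hM
    exact Finset.sum_pos (fun k _ => mul_pos (hPpos m k) (hwpos k)) Finset.univ_nonempty
  have hs := NKL.pObs_pos hb hμ i₀ r₀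
  set s : ℝ := ∑ m'', bern (μ m'' i₀) r₀ * b m'' with hsdef
  have hlaw1 : ∀ m, law P μ (n+1) m is rs = bern (μ m i₀) r₀ * W m := fun m => rfl
  have hQ : Qlaw P μ (n+1) b is rs = ∑ m, b m * (bern (μ m i₀) r₀ * W m) := rfl
  have hQpos : 0 < Qlaw P μ (n+1) b is rs :=
    NKL.Qlaw_pos hM hPpos hμ hb (n+1) is rs
  set Q : ℝ := Qlaw P μ (n+1) b is rs with hQdef
  have hb' : IsBelief (Hupd P μ b i₀ r₀) := NKL.Hupd_isBelief hP hμ hb i₀ r₀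
  have hQ' : Qlaw P μ n (Hupd P μ b i₀ r₀) is' rs' = Q / s := by
    unfold Qlaw Hupd
    rw [eq_div_iff hs.ne', Finset.sum_mul]
    have h1 : ∀ i, (∑ m'', P m'' i * (bern (μ m'' i₀) r₀ * b m'')) / s
          * law P μ n i is' rs' * s
        = ∑ m'', b m'' * bern (μ m'' i₀) r₀ * (P m'' i * w i) := by
      intro i
      rw [div_mul_eq_mul_div, div_mul_cancel₀ _ hs.ne', Finset.sum_mul]
      exact Finset.sum_congr rfl fun m'' _ => by rw [hw]; ring
    rw [Finset.sum_congr rfl (fun i _ => h1 i), Finset.sum_comm, hQ]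
    apply Finset.sum_congr rfl
    intro m _
    rw [hW]
    simp only [Finset.mul_sum]
    exact Finset.sum_congr rfl fun k _ => by ring
  unfold NKL.post
  rw [hQ']
  unfold Hupd
  have cancel : ∀ a : ℝ, a / s / (Q / s) = a / Q := by
    intro a
    rw [div_div_eq_mul_div, div_mul_eq_mul_div, mul_comm,
      mul_comm s a, mul_div_assoc, div_self hs.ne', mul_one]
  have lhs_eq : (∑ m'', P m'' m' * (bern (μ m'' i₀) r₀ * b m'')) / s
        * law P μ n m' is' rs' / (Q / s)
      = ∑ m, b m * bern (μ m i₀) r₀ * P m m' * w m' / Q := by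
    rw [div_mul_eq_mul_div, cancel, Finset.sum_mul, Finset.sum_div]
    exact Finset.sum_congr rfl fun m _ => by rw [hw]; ring
  rw [lhs_eq]
  apply Finset.sum_congr rfl
  intro m _
  rw [hlaw1 m]
  have hWne := (hWpos m).ne'
  have hQne := hQpos.ne'
  have hQeq : Qlaw P μ (n+1) b is rs = Q := rfl
  have hWeq : (∑ x, P m x * law P μ n x is' rs') = W m := rfl
  have hweq : law P μ n m' is' rs' = w m' := rfl
  simp only [hQeq, hWeq, hweq]
  field_simp

end Aux3

section Aux4

variable {M I : ℕ} {P : Fin M → Fin M → ℝ} {μ : Fin M → Fin I → ℝ}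

/-- Pointwise filter stability via the conditional-chain contraction. -/
lemma NKL.core (hM : 2 ≤ M) (hP : RowStochastic P)
    (hμ : ∀ m i, μ m i ∈ Set.Ioo (0:ℝ) 1) {ε : ℝ} (hε0 : 0 < ε)
    (hεle : ∀ m m', ε ≤ P m m') (hεub : ∀ m m', P m m' ≤ 1 - ε) (hεhalf : ε ≤ 1/2) :
    ∀ (n : ℕ) (is : Fin (n+1) → Fin I) (rs : Fin (n+1) → Bool) (b₁ b₂ : Fin M → ℝ),
      IsBelief b₁ → IsBelief b₂ →
      l1 (Hiter P μ (n+1) b₁ is rs) (Hiter P μ (n+1) b₂ is rs)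
        ≤ ((1-2*ε)/(1-ε))^(n+1) *
            l1 (NKL.post P μ n b₁ is rs) (NKL.post P μ n b₂ is rs) := by
  have hM0 : 0 < M := lt_of_lt_of_le (by norm_num) hM
  have hPpos : ∀ m m', 0 < P m m' := fun m m' => lt_of_lt_of_le hε0 (hεle m m')
  have hεlt1 : ε < 1 := lt_of_le_of_lt hεhalf (by norm_num)
  have h1ε : (0:ℝ) < 1 - ε := by linarith
  have h2ε : (0:ℝ) ≤ 1 - 2*ε := by linarith
  set α : ℝ := (1-2*ε)/(1-ε) with hαdef
  have hα0 : 0 ≤ α := div_nonneg h2ε h1ε.le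
  have h2εα : 1 - 2*ε ≤ α := by
    rw [hαdef, le_div_iff₀ h1ε]
    nlinarith
  intro n
  induction n with
  | zero =>
    intro is rs b₁ b₂ hb₁ hb₂
    have hH : ∀ b : Fin M → ℝ, Hiter P μ 1 b is rs = Hupd P μ b (is 0) (rs 0) := by
      intro b; rfl
    rw [hH b₁, hH b₂]
    have hzsum : ∑ m, (NKL.post P μ 0 b₁ is rs m - NKL.post P μ 0 b₂ is rs m) = 0 := by
      rw [Finset.sum_sub_distrib,
        (NKL.post_isBelief hM0 hPpos hμ hb₁ 0 is rs).2,
        (NKL.post_isBelief hM0 hPpos hμ hb₂ 0 is rs).2, sub_self]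
    have hl1 : l1 (Hupd P μ b₁ (is 0) (rs 0)) (Hupd P μ b₂ (is 0) (rs 0))
        = ∑ m', |∑ m, (NKL.post P μ 0 b₁ is rs m - NKL.post P μ 0 b₂ is rs m) * P m m'| := by
      unfold l1
      apply Finset.sum_congr rfl
      intro m' _
      rw [NKL.Hupd_post0 hM0 hPpos hμ hb₁ is rs m', NKL.Hupd_post0 hM0 hPpos hμ hb₂ is rs m']
      rw [← Finset.sum_sub_distrib]
      congr 1
      exact Finset.sum_congr rfl fun m _ => by ring
    rw [hl1]
    have hdob := NKL.dob P (fun _ => ε)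
      (fun m => NKL.post P μ 0 b₁ is rs m - NKL.post P μ 0 b₂ is rs m) hεle hP.2 hzsum
    have hsumγ : ∑ _m' : Fin M, ε = M * ε := by
      rw [Finset.sum_const, Finset.card_univ, Fintype.card_fin, nsmul_eq_mul]
    rw [hsumγ] at hdob
    refine le_trans hdob ?_
    have hl1z : ∑ m, |NKL.post P μ 0 b₁ is rs m - NKL.post P μ 0 b₂ is rs m|
        = l1 (NKL.post P μ 0 b₁ is rs) (NKL.post P μ 0 b₂ is rs) := rfl
    rw [hl1z, pow_one]
    apply mul_le_mul_of_nonneg_right _ (NKL.l1_nonneg _ _)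
    have : (M:ℝ) ≥ 2 := by exact_mod_cast hM
    calc 1 - (M:ℝ)*ε ≤ 1 - 2*ε := by nlinarith
      _ ≤ α := h2εα
  | succ n ih =>
    intro is rs b₁ b₂ hb₁ hb₂
    have hb₁' : IsBelief (Hupd P μ b₁ (is 0) (rs 0)) := NKL.Hupd_isBelief hP hμ hb₁ _ _
    have hb₂' : IsBelief (Hupd P μ b₂ (is 0) (rs 0)) := NKL.Hupd_isBelief hP hμ hb₂ _ _
    have hH : ∀ b : Fin M → ℝ, Hiter P μ (n+2) b is rs
        = Hiter P μ (n+1) (Hupd P μ b (is 0) (rs 0))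
            (fun t => is t.succ) (fun t => rs t.succ) := fun b => rfl
    rw [hH b₁, hH b₂]
    refine le_trans (ih _ _ _ _ hb₁' hb₂') ?_
    have hwpos : ∀ k, 0 < law P μ n k (fun t => is t.succ) (fun t => rs t.succ) :=
      fun k => NKL.law_pos hM0 hPpos hμ n k _ _
    have hne : Nonempty (Fin M) := Fin.pos_iff_nonempty.mp hM0
    have hWpos : ∀ m, 0 < ∑ k, P m k * law P μ n k (fun t => is t.succ) (fun t => rs t.succ) :=
      fun m => Finset.sum_pos (fun k _ => mul_pos (hPpos m k) (hwpos k)) Finset.univ_nonempty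
    have hSwpos : 0 < ∑ k, law P μ n k (fun t => is t.succ) (fun t => rs t.succ) :=
      Finset.sum_pos (fun k _ => hwpos k) Finset.univ_nonempty
    have hWle : ∀ m, ∑ k, P m k * law P μ n k (fun t => is t.succ) (fun t => rs t.succ)
        ≤ (1-ε) * ∑ k, law P μ n k (fun t => is t.succ) (fun t => rs t.succ) := by
      intro m
      rw [Finset.mul_sum]
      exact Finset.sum_le_sum fun k _ =>
        mul_le_mul_of_nonneg_right (hεub m k) (hwpos k).le
    have key : l1 (NKL.post P μ n (Hupd P μ b₁ (is 0) (rs 0))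
          (fun t => is t.succ) (fun t => rs t.succ))
        (NKL.post P μ n (Hupd P μ b₂ (is 0) (rs 0))
          (fun t => is t.succ) (fun t => rs t.succ))
        ≤ α * l1 (NKL.post P μ (n+1) b₁ is rs) (NKL.post P μ (n+1) b₂ is rs) := by
      have hzsum : ∑ m, (NKL.post P μ (n+1) b₁ is rs m - NKL.post P μ (n+1) b₂ is rs m) = 0 := by
        rw [Finset.sum_sub_distrib,
          (NKL.post_isBelief hM0 hPpos hμ hb₁ (n+1) is rs).2,
          (NKL.post_isBelief hM0 hPpos hμ hb₂ (n+1) is rs).2, sub_self]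
      have hKγ : ∀ m m', (fun m' => ε * law P μ n m' (fun t => is t.succ) (fun t => rs t.succ)
            / ((1-ε) * ∑ k, law P μ n k (fun t => is t.succ) (fun t => rs t.succ))) m'
          ≤ (fun m m' => P m m' * law P μ n m' (fun t => is t.succ) (fun t => rs t.succ)
            / ∑ k, P m k * law P μ n k (fun t => is t.succ) (fun t => rs t.succ)) m m' := by
        intro m m'
        exact div_le_div₀ (mul_pos (hPpos m m') (hwpos m')).le
          (mul_le_mul_of_nonneg_right (hεle m m') (hwpos m').le) (hWpos m) (hWle m)
      have hKrow : ∀ m, ∑ m', (fun m m' => P m m' * law P μ n m' (fun t => is t.succ) (fun t => rs t.succ)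
            / ∑ k, P m k * law P μ n k (fun t => is t.succ) (fun t => rs t.succ)) m m' = 1 := by
        intro m
        simp only
        rw [← Finset.sum_div]
        exact div_self (hWpos m).ne'
      have hdob := NKL.dob
        (fun m m' => P m m' * law P μ n m' (fun t => is t.succ) (fun t => rs t.succ)
          / ∑ k, P m k * law P μ n k (fun t => is t.succ) (fun t => rs t.succ))
        (fun m' => ε * law P μ n m' (fun t => is t.succ) (fun t => rs t.succ)
          / ((1-ε) * ∑ k, law P μ n k (fun t => is t.succ) (fun t => rs t.succ)))
        (fun m => NKL.post P μ (n+1) b₁ is rs m - NKL.post P μ (n+1) b₂ is rs m)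
        hKγ hKrow hzsum
      have hsumγ : ∑ m' : Fin M, ε * law P μ n m' (fun t => is t.succ) (fun t => rs t.succ)
            / ((1-ε) * ∑ k, law P μ n k (fun t => is t.succ) (fun t => rs t.succ))
          = ε / (1-ε) := by
        rw [← Finset.sum_div, ← Finset.mul_sum]
        rw [mul_comm (1-ε) (∑ k, law P μ n k (fun t => is t.succ) (fun t => rs t.succ))]
        rw [mul_comm ε (∑ k, law P μ n k (fun t => is t.succ) (fun t => rs t.succ))]
        rw [mul_div_mul_left _ _ hSwpos.ne']
      have hl1 : l1 (NKL.post P μ n (Hupd P μ b₁ (is 0) (rs 0))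
            (fun t => is t.succ) (fun t => rs t.succ))
          (NKL.post P μ n (Hupd P μ b₂ (is 0) (rs 0))
            (fun t => is t.succ) (fun t => rs t.succ))
          = ∑ m', |∑ m, (NKL.post P μ (n+1) b₁ is rs m - NKL.post P μ (n+1) b₂ is rs m)
              * (P m m' * law P μ n m' (fun t => is t.succ) (fun t => rs t.succ)
                / ∑ k, P m k * law P μ n k (fun t => is t.succ) (fun t => rs t.succ))| := by
        unfold l1
        apply Finset.sum_congr rfl
        intro m' _
        rw [NKL.post_step hM0 hP hPpos hμ hb₁ n is rs m',
          NKL.post_step hM0 hP hPpos hμ hb₂ n is rs m']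
        rw [← Finset.sum_sub_distrib]
        congr 1
        exact Finset.sum_congr rfl fun m _ => by ring
      rw [hl1]
      refine le_trans hdob ?_
      rw [hsumγ]
      have hcoef : 1 - ε / (1-ε) = α := by
        rw [hαdef]
        field_simp
        ring
      rw [hcoef]
      apply le_of_eq
      unfold l1
      rfl
    calc α^(n+1) * l1 (NKL.post P μ n (Hupd P μ b₁ (is 0) (rs 0))
            (fun t => is t.succ) (fun t => rs t.succ))
          (NKL.post P μ n (Hupd P μ b₂ (is 0) (rs 0))
            (fun t => is t.succ) (fun t => rs t.succ))
        ≤ α^(n+1) * (α * l1 (NKL.post P μ (n+1) b₁ is rs) (NKL.post P μ (n+1) b₂ is rs)) :=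
          mul_le_mul_of_nonneg_left key (pow_nonneg hα0 _)
      _ = α^(n+1+1) * l1 (NKL.post P μ (n+1) b₁ is rs) (NKL.post P μ (n+1) b₂ is rs) := by
          rw [pow_succ]; ring

end Aux4

section Aux5

variable {M I : ℕ} {P : Fin M → Fin M → ℝ} {μ : Fin M → Fin I → ℝ}

lemma NKL.gbdd (hM0 : 0 < M) (hP : RowStochastic P) (hPpos : ∀ m m', 0 < P m m')
    (hμ : ∀ m i, μ m i ∈ Set.Ioo (0:ℝ) 1) (n : ℕ) (is : Fin (n+1) → Fin I)
    {b : Fin M → ℝ} (hb : IsBelief b) {f : (Fin M → ℝ) → ℝ}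
    (hfbdd : ∀ b, IsBelief b → |f b| ≤ 1) (m : Fin M) :
    |∑ rs : Fin (n+1) → Bool, f (Hiter P μ (n+1) b is rs) * law P μ n m is rs| ≤ 1 := by
  refine le_trans (Finset.abs_sum_le_sum_abs _ _) ?_
  calc ∑ rs : Fin (n+1) → Bool, |f (Hiter P μ (n+1) b is rs) * law P μ n m is rs|
      ≤ ∑ rs : Fin (n+1) → Bool, law P μ n m is rs := by
        apply Finset.sum_le_sum
        intro rs _
        rw [abs_mul, abs_of_pos (NKL.law_pos hM0 hPpos hμ n m is rs)]
        exact mul_le_of_le_one_left (NKL.law_pos hM0 hPpos hμ n m is rs).le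
          (hfbdd _ (NKL.Hiter_isBelief hP hμ (n+1) hb is rs))
    _ = 1 := NKL.law_sum_one hP.2 n m is

lemma NKL.hdiff (hM : 2 ≤ M) (hP : RowStochastic P)
    (hμ : ∀ m i, μ m i ∈ Set.Ioo (0:ℝ) 1) {ε : ℝ} (hε0 : 0 < ε)
    (hεle : ∀ m m', ε ≤ P m m') (hεub : ∀ m m', P m m' ≤ 1 - ε) (hεhalf : ε ≤ 1/2)
    (n : ℕ) (is : Fin (n+1) → Fin I) {b b' : Fin M → ℝ} (hb : IsBelief b) (hb' : IsBelief b')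
    {f : (Fin M → ℝ) → ℝ}
    (hfLip : ∀ b b', IsBelief b → IsBelief b' → |f b - f b'| ≤ l1 b b') (m' : Fin M) :
    |(∑ rs : Fin (n+1) → Bool, f (Hiter P μ (n+1) b is rs) * law P μ n m' is rs)
      - ∑ rs : Fin (n+1) → Bool, f (Hiter P μ (n+1) b' is rs) * law P μ n m' is rs|
      ≤ 2 * ((1-2*ε)/(1-ε))^(n+1) := by
  have hM0 : 0 < M := lt_of_lt_of_le (by norm_num) hM
  have hPpos : ∀ m m', 0 < P m m' := fun m m' => lt_of_lt_of_le hε0 (hεle m m')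
  have h1ε : (0:ℝ) < 1 - ε := by linarith [lt_of_le_of_lt hεhalf (show (1:ℝ)/2 < 1 by norm_num)]
  have hα0 : 0 ≤ (1-2*ε)/(1-ε) := div_nonneg (by linarith) h1ε.le
  rw [← Finset.sum_sub_distrib]
  refine le_trans (Finset.abs_sum_le_sum_abs _ _) ?_
  have hbound : ∀ rs : Fin (n+1) → Bool,
      |f (Hiter P μ (n+1) b is rs) * law P μ n m' is rs
        - f (Hiter P μ (n+1) b' is rs) * law P μ n m' is rs|
      ≤ 2 * ((1-2*ε)/(1-ε))^(n+1) * law P μ n m' is rs := by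
    intro rs
    have hlawpos := NKL.law_pos hM0 hPpos hμ n m' is rs
    rw [← sub_mul, abs_mul, abs_of_pos hlawpos]
    apply mul_le_mul_of_nonneg_right _ hlawpos.le
    refine le_trans (hfLip _ _ (NKL.Hiter_isBelief hP hμ (n+1) hb is rs)
      (NKL.Hiter_isBelief hP hμ (n+1) hb' is rs)) ?_
    refine le_trans (NKL.core hM hP hμ hε0 hεle hεub hεhalf n is rs b b' hb hb') ?_
    rw [mul_comm]
    apply mul_le_mul_of_nonneg_right _ (pow_nonneg hα0 _)
    exact NKL.l1_le_two (NKL.post_isBelief hM0 hPpos hμ hb n is rs)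
      (NKL.post_isBelief hM0 hPpos hμ hb' n is rs)
  refine le_trans (Finset.sum_le_sum (fun rs _ => hbound rs)) ?_
  rw [← Finset.mul_sum, NKL.law_sum_one hP.2 n m' is, mul_one]

end Aux5

section Aux6

variable {M I : ℕ} {P : Fin M → Fin M → ℝ} {μ : Fin M → Fin I → ℝ}

lemma NKL.rearrange {σ τ : Type*} [Fintype σ] [Fintype τ]
    (A : σ → ℝ) (B : ℝ) (C : τ → ℝ) (D : τ → σ → ℝ) :
    ∑ s, A s * (B * ∑ t, C t * D t s) = B * ∑ t, C t * ∑ s, A s * D t s := by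
  simp only [Finset.mul_sum]
  rw [Finset.sum_comm]
  apply Finset.sum_congr rfl
  intro t _
  apply Finset.sum_congr rfl
  intro s _
  ring

lemma NKL.oscn (hM : 2 ≤ M) (hP : RowStochastic P)
    (hμ : ∀ m i, μ m i ∈ Set.Ioo (0:ℝ) 1) {ε : ℝ} (hε0 : 0 < ε)
    (hεle : ∀ m m', ε ≤ P m m') (hεub : ∀ m m', P m m' ≤ 1 - ε) (hεhalf : ε ≤ 1/2)
    (n : ℕ) (is : Fin (n+2) → Fin I) {b : Fin M → ℝ} (hb : IsBelief b)
    {f : (Fin M → ℝ) → ℝ}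
    (hfLip : ∀ b b', IsBelief b → IsBelief b' → |f b - f b'| ≤ l1 b b')
    (hfbdd : ∀ b, IsBelief b → |f b| ≤ 1) (m mt : Fin M) :
    |(∑ rs : Fin (n+2) → Bool, f (Hiter P μ (n+2) b is rs) * law P μ (n+1) m is rs)
      - ∑ rs : Fin (n+2) → Bool, f (Hiter P μ (n+2) b is rs) * law P μ (n+1) mt is rs|
      ≤ (2 - 4*ε) + 2*((1-2*ε)/(1-ε))^(n+1) := by
  have hM0 : 0 < M := lt_of_lt_of_le (by norm_num) hM
  have hPpos : ∀ m m', 0 < P m m' := fun m m' => lt_of_lt_of_le hε0 (hεle m m')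
  have hsplit : ∀ x : Fin M,
      (∑ rs : Fin (n+2) → Bool, f (Hiter P μ (n+2) b is rs) * law P μ (n+1) x is rs)
      = ∑ r : Bool, bern (μ x (is 0)) r *
          ∑ m', P x m' * (∑ rs' : Fin (n+1) → Bool,
            f (Hiter P μ (n+1) (Hupd P μ b (is 0) r) (fun t => is t.succ) rs')
              * law P μ n m' (fun t => is t.succ) rs') := by
    intro x
    rw [NKL.sum_split (n+1)]
    apply Finset.sum_congr rfl
    intro r _
    have heach : ∀ rs' : Fin (n+1) → Bool,
        f (Hiter P μ (n+2) b is (Fin.cons r rs')) * law P μ (n+1) x is (Fin.cons r rs')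
        = f (Hiter P μ (n+1) (Hupd P μ b (is 0) r) (fun t => is t.succ) rs')
            * (bern (μ x (is 0)) r * ∑ m', P x m' * law P μ n m' (fun t => is t.succ) rs') := by
      intro rs'
      have hH : Hiter P μ (n+2) b is (Fin.cons r rs')
          = Hiter P μ (n+1) (Hupd P μ b (is 0) r) (fun t => is t.succ) rs' := by
        show Hiter P μ (n+1) (Hupd P μ b (is 0) ((Fin.cons r rs' : Fin (n+2) → Bool) 0))
            (fun t => is t.succ) (fun t => (Fin.cons r rs' : Fin (n+2) → Bool) t.succ) = _
        rw [Fin.cons_zero, NKL.cons_tail]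
      have hL : law P μ (n+1) x is (Fin.cons r rs')
          = bern (μ x (is 0)) r * ∑ m', P x m' * law P μ n m' (fun t => is t.succ) rs' := by
        show bern (μ x (is 0)) ((Fin.cons r rs' : Fin (n+2) → Bool) 0) * _ = _
        rw [Fin.cons_zero, NKL.cons_tail]
      rw [hH, hL]
    rw [Finset.sum_congr rfl (fun rs' _ => heach rs')]
    exact NKL.rearrange _ _ _ _
  rw [hsplit m, hsplit mt]
  have hb' : ∀ r : Bool, IsBelief (Hupd P μ b (is 0) r) :=
    fun r => NKL.Hupd_isBelief hP hμ hb (is 0) r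
  -- notation
  set h : Bool → Fin M → ℝ := fun r m' => ∑ rs' : Fin (n+1) → Bool,
      f (Hiter P μ (n+1) (Hupd P μ b (is 0) r) (fun t => is t.succ) rs')
        * law P μ n m' (fun t => is t.succ) rs' with hh
  have hhbdd : ∀ (r : Bool) (m' : Fin M), |h r m'| ≤ 1 :=
    fun r m' => NKL.gbdd hM0 hP hPpos hμ n (fun t => is t.succ) (hb' r) hfbdd m'
  have hhdiff : ∀ m' : Fin M, |h true m' - h false m'| ≤ 2*((1-2*ε)/(1-ε))^(n+1) :=
    fun m' => NKL.hdiff hM hP hμ hε0 hεle hεub hεhalf n (fun t => is t.succ)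
      (hb' true) (hb' false) hfLip m'
  rw [Fintype.sum_bool, Fintype.sum_bool]
  simp only [bern, if_true, if_false, Bool.false_eq_true]
  set ST₁ : ℝ := ∑ m', P m m' * h true m' with hST₁
  set SF₁ : ℝ := ∑ m', P m m' * h false m' with hSF₁
  set ST₂ : ℝ := ∑ m', P mt m' * h true m' with hST₂
  set SF₂ : ℝ := ∑ m', P mt m' * h false m' with hSF₂
  have hμm := hμ m (is 0)
  have hμmt := hμ mt (is 0)
  have e1 : |ST₁ - ST₂| ≤ 2 - 4*ε := by
    rw [hST₁, hST₂, ← Finset.sum_sub_distrib]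
    refine le_trans (Finset.abs_sum_le_sum_abs _ _) ?_
    have hsumM : ∑ _m' : Fin M, (2:ℝ)*ε = M * (2*ε) := by
      rw [Finset.sum_const, Finset.card_univ, Fintype.card_fin, nsmul_eq_mul]
    calc ∑ m', |P m m' * h true m' - P mt m' * h true m'|
        ≤ ∑ m', (P m m' + P mt m' - 2*ε) := by
          apply Finset.sum_le_sum
          intro m' _
          rw [← sub_mul, abs_mul]
          refine le_trans (mul_le_of_le_one_right (abs_nonneg _) (hhbdd true m')) ?_
          rw [abs_sub_le_iff]
          constructor <;> nlinarith [hεle m m', hεle mt m']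
      _ = 2 - (M:ℝ)*(2*ε) := by
          rw [Finset.sum_sub_distrib, Finset.sum_add_distrib, hP.2 m, hP.2 mt, hsumM]
          ring
      _ ≤ 2 - 4*ε := by
          have : (M:ℝ) ≥ 2 := by exact_mod_cast hM
          nlinarith
  have e2 : |SF₁ - SF₂| ≤ 2 - 4*ε := by
    rw [hSF₁, hSF₂, ← Finset.sum_sub_distrib]
    refine le_trans (Finset.abs_sum_le_sum_abs _ _) ?_
    have hsumM : ∑ _m' : Fin M, (2:ℝ)*ε = M * (2*ε) := by
      rw [Finset.sum_const, Finset.card_univ, Fintype.card_fin, nsmul_eq_mul]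
    calc ∑ m', |P m m' * h false m' - P mt m' * h false m'|
        ≤ ∑ m', (P m m' + P mt m' - 2*ε) := by
          apply Finset.sum_le_sum
          intro m' _
          rw [← sub_mul, abs_mul]
          refine le_trans (mul_le_of_le_one_right (abs_nonneg _) (hhbdd false m')) ?_
          rw [abs_sub_le_iff]
          constructor <;> nlinarith [hεle m m', hεle mt m']
      _ = 2 - (M:ℝ)*(2*ε) := by
          rw [Finset.sum_sub_distrib, Finset.sum_add_distrib, hP.2 m, hP.2 mt, hsumM]
          ring
      _ ≤ 2 - 4*ε := by
          have : (M:ℝ) ≥ 2 := by exact_mod_cast hM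
          nlinarith
  have e3 : |ST₂ - SF₂| ≤ 2*((1-2*ε)/(1-ε))^(n+1) := by
    rw [hST₂, hSF₂, ← Finset.sum_sub_distrib]
    refine le_trans (Finset.abs_sum_le_sum_abs _ _) ?_
    calc ∑ m', |P mt m' * h true m' - P mt m' * h false m'|
        ≤ ∑ m', P mt m' * (2*((1-2*ε)/(1-ε))^(n+1)) := by
          apply Finset.sum_le_sum
          intro m' _
          rw [← mul_sub, abs_mul, abs_of_pos (hPpos mt m')]
          exact mul_le_mul_of_nonneg_left (hhdiff m') (hPpos mt m').le
      _ = 2*((1-2*ε)/(1-ε))^(n+1) := by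
          rw [← Finset.sum_mul, hP.2 mt, one_mul]
  have hid : μ m (is 0) * ST₁ + (1 - μ m (is 0)) * SF₁
      - (μ mt (is 0) * ST₂ + (1 - μ mt (is 0)) * SF₂)
      = μ m (is 0) * (ST₁ - ST₂) + (1 - μ m (is 0)) * (SF₁ - SF₂)
        + (μ m (is 0) - μ mt (is 0)) * (ST₂ - SF₂) := by ring
  rw [hid]
  have habs1 : |μ m (is 0) - μ mt (is 0)| ≤ 1 := by
    rw [abs_le]
    constructor <;> nlinarith [hμm.1, hμm.2, hμmt.1, hμmt.2]
  refine le_trans (abs_add_le _ _) ?_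
  refine le_trans (add_le_add_left (abs_add_le _ _) _) ?_
  rw [abs_mul, abs_mul, abs_mul]
  have t1 : |μ m (is 0)| * |ST₁ - ST₂| ≤ μ m (is 0) * (2 - 4*ε) := by
    rw [abs_of_pos hμm.1]
    exact mul_le_mul_of_nonneg_left e1 hμm.1.le
  have t2 : |1 - μ m (is 0)| * |SF₁ - SF₂| ≤ (1 - μ m (is 0)) * (2 - 4*ε) := by
    rw [abs_of_pos (by linarith [hμm.2] : (0:ℝ) < 1 - μ m (is 0))]
    exact mul_le_mul_of_nonneg_left e2 (by linarith [hμm.2])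
  have t3 : |μ m (is 0) - μ mt (is 0)| * |ST₂ - SF₂| ≤ 2*((1-2*ε)/(1-ε))^(n+1) := by
    refine le_trans (mul_le_mul habs1 e3 (abs_nonneg _) (by norm_num)) ?_
    rw [one_mul]
  nlinarith [t1, t2, t3]
end Aux6

section Aux7

variable {M I : ℕ} {P : Fin M → Fin M → ℝ} {μ : Fin M → Fin I → ℝ}

lemma NKL.osc0 (hM : 2 ≤ M) (hP : RowStochastic P)
    (hμ : ∀ m i, μ m i ∈ Set.Ioo (0:ℝ) 1) {ε : ℝ} (hε0 : 0 < ε)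
    (hεle : ∀ m m', ε ≤ P m m') (hεhalf : ε ≤ 1/2)
    (is : Fin 1 → Fin I) {b : Fin M → ℝ} (hb : IsBelief b)
    {f : (Fin M → ℝ) → ℝ}
    (hfLip : ∀ b b', IsBelief b → IsBelief b' → |f b - f b'| ≤ l1 b b')
    (m mt : Fin M) :
    |(∑ rs : Fin 1 → Bool, f (Hiter P μ 1 b is rs) * law P μ 0 m is rs)
      - ∑ rs : Fin 1 → Bool, f (Hiter P μ 1 b is rs) * law P μ 0 mt is rs|
      ≤ 2*((1-2*ε)/(1-ε)) := by
  have hM0 : 0 < M := lt_of_lt_of_le (by norm_num) hM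
  have hPpos : ∀ m m', 0 < P m m' := fun m m' => lt_of_lt_of_le hε0 (hεle m m')
  have h1ε : (0:ℝ) < 1 - ε := by linarith [lt_of_le_of_lt hεhalf (show (1:ℝ)/2 < 1 by norm_num)]
  have hsplit : ∀ x : Fin M,
      (∑ rs : Fin 1 → Bool, f (Hiter P μ 1 b is rs) * law P μ 0 x is rs)
      = f (Hupd P μ b (is 0) true) * μ x (is 0)
        + f (Hupd P μ b (is 0) false) * (1 - μ x (is 0)) := by
    intro x
    rw [NKL.sum_split 0, Fintype.sum_bool]
    congr 1
    · rw [Fintype.sum_unique]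
      show f (Hupd P μ b (is 0) ((Fin.cons true _ : Fin 1 → Bool) 0))
          * bern (μ x (is 0)) ((Fin.cons true _ : Fin 1 → Bool) 0) = _
      rw [Fin.cons_zero]
      simp [bern]
    · rw [Fintype.sum_unique]
      show f (Hupd P μ b (is 0) ((Fin.cons false _ : Fin 1 → Bool) 0))
          * bern (μ x (is 0)) ((Fin.cons false _ : Fin 1 → Bool) 0) = _
      rw [Fin.cons_zero]
      simp [bern]
  rw [hsplit m, hsplit mt]
  have hqT := NKL.post_isBelief hM0 hPpos hμ hb 0 is (fun _ => true)
  have hqF := NKL.post_isBelief hM0 hPpos hμ hb 0 is (fun _ => false)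
  have hzsum : ∑ m'', (NKL.post P μ 0 b is (fun _ => true) m''
      - NKL.post P μ 0 b is (fun _ => false) m'') = 0 := by
    rw [Finset.sum_sub_distrib, hqT.2, hqF.2, sub_self]
  have hl1eq : l1 (Hupd P μ b (is 0) true) (Hupd P μ b (is 0) false)
      = ∑ m', |∑ m'', (NKL.post P μ 0 b is (fun _ => true) m''
          - NKL.post P μ 0 b is (fun _ => false) m'') * P m'' m'| := by
    unfold l1
    apply Finset.sum_congr rfl
    intro m' _
    have h1 : Hupd P μ b (is 0) true m'
        = ∑ m'', NKL.post P μ 0 b is (fun _ => true) m'' * P m'' m' :=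
      NKL.Hupd_post0 hM0 hPpos hμ hb is (fun _ => true) m'
    have h2 : Hupd P μ b (is 0) false m'
        = ∑ m'', NKL.post P μ 0 b is (fun _ => false) m'' * P m'' m' :=
      NKL.Hupd_post0 hM0 hPpos hμ hb is (fun _ => false) m'
    rw [h1, h2, ← Finset.sum_sub_distrib]
    congr 1
    exact Finset.sum_congr rfl fun m'' _ => by ring
  have hl1 : l1 (Hupd P μ b (is 0) true) (Hupd P μ b (is 0) false)
      ≤ ((1-2*ε)/(1-ε)) * 2 := by
    rw [hl1eq]
    have hdob := NKL.dob P (fun _ => ε)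
      (fun m'' => NKL.post P μ 0 b is (fun _ => true) m''
        - NKL.post P μ 0 b is (fun _ => false) m'') hεle hP.2 hzsum
    refine le_trans hdob ?_
    have hsumγ : ∑ _m' : Fin M, ε = M * ε := by
      rw [Finset.sum_const, Finset.card_univ, Fintype.card_fin, nsmul_eq_mul]
    rw [hsumγ]
    have h2ε : (0:ℝ) ≤ 1-2*ε := by linarith
    have hc : 1 - (M:ℝ)*ε ≤ (1-2*ε)/(1-ε) := by
      have hMc : (M:ℝ) ≥ 2 := by exact_mod_cast hM
      have step1 : 1 - (M:ℝ)*ε ≤ 1 - 2*ε := by nlinarith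
      refine le_trans step1 ?_
      rw [le_div_iff₀ h1ε]
      nlinarith [mul_nonneg h2ε hε0.le]
    have hz2 : ∑ m'', |NKL.post P μ 0 b is (fun _ => true) m''
        - NKL.post P μ 0 b is (fun _ => false) m''| ≤ 2 := NKL.l1_le_two hqT hqF
    have hznn : (0:ℝ) ≤ ∑ m'', |NKL.post P μ 0 b is (fun _ => true) m''
        - NKL.post P μ 0 b is (fun _ => false) m''| :=
      Finset.sum_nonneg fun _ _ => abs_nonneg _
    calc (1 - (M:ℝ)*ε) * _ ≤ ((1-2*ε)/(1-ε)) * _ := mul_le_mul_of_nonneg_right hc hznn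
      _ ≤ ((1-2*ε)/(1-ε)) * 2 := by
          apply mul_le_mul_of_nonneg_left hz2 (div_nonneg (by linarith) h1ε.le)
  have hfdiff : |f (Hupd P μ b (is 0) true) - f (Hupd P μ b (is 0) false)|
      ≤ ((1-2*ε)/(1-ε)) * 2 :=
    le_trans (hfLip _ _ (NKL.Hupd_isBelief hP hμ hb (is 0) true)
      (NKL.Hupd_isBelief hP hμ hb (is 0) false)) hl1
  have hμm := hμ m (is 0)
  have hμmt := hμ mt (is 0)
  have hid : f (Hupd P μ b (is 0) true) * μ m (is 0)
      + f (Hupd P μ b (is 0) false) * (1 - μ m (is 0))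
      - (f (Hupd P μ b (is 0) true) * μ mt (is 0)
        + f (Hupd P μ b (is 0) false) * (1 - μ mt (is 0)))
      = (μ m (is 0) - μ mt (is 0))
        * (f (Hupd P μ b (is 0) true) - f (Hupd P μ b (is 0) false)) := by ring
  rw [hid, abs_mul]
  have habs1 : |μ m (is 0) - μ mt (is 0)| ≤ 1 := by
    rw [abs_le]
    constructor <;> nlinarith [hμm.1, hμm.2, hμmt.1, hμmt.2]
  calc |μ m (is 0) - μ mt (is 0)|
        * |f (Hupd P μ b (is 0) true) - f (Hupd P μ b (is 0) false)|
      ≤ 1 * (((1-2*ε)/(1-ε)) * 2) :=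
        mul_le_mul habs1 hfdiff (abs_nonneg _) (by norm_num)
    _ = 2*((1-2*ε)/(1-ε)) := by ring

end Aux7

section Aux8

variable {M I : ℕ} {P : Fin M → Fin M → ℝ} {μ : Fin M → Fin I → ℝ}

lemma NKL.center (hM0 : 0 < M) (d g : Fin M → ℝ) (hd : ∑ m, d m = 0)
    {K : ℝ} (hosc : ∀ m m', |g m - g m'| ≤ K) :
    |∑ m, d m * g m| ≤ K/2 * ∑ m, |d m| := by
  have : Nonempty (Fin M) := Fin.pos_iff_nonempty.mp hM0
  obtain ⟨m₁, hm₁⟩ := Finite.exists_max g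
  obtain ⟨m₂, hm₂⟩ := Finite.exists_min g
  set c : ℝ := (g m₁ + g m₂)/2 with hc
  have hKc : ∀ m, |g m - c| ≤ K/2 := by
    intro m
    have h12 : g m₁ - g m₂ ≤ K := le_trans (le_abs_self _) (hosc m₁ m₂)
    have hx : g m ≤ g m₁ := hm₁ m
    have hy : g m₂ ≤ g m := hm₂ m
    rw [abs_le]
    constructor
    · rw [hc]; linarith
    · rw [hc]; linarith
  have heq : ∑ m, d m * g m = ∑ m, d m * (g m - c) := by
    rw [Finset.sum_congr rfl (fun m _ => by ring :
      ∀ m ∈ Finset.univ, d m * (g m - c) = d m * g m - c * d m)]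
    rw [Finset.sum_sub_distrib, ← Finset.mul_sum, hd, mul_zero, sub_zero]
  rw [heq]
  refine le_trans (Finset.abs_sum_le_sum_abs _ _) ?_
  rw [Finset.mul_sum]
  apply Finset.sum_le_sum
  intro m _
  rw [abs_mul, mul_comm]
  exact mul_le_mul_of_nonneg_right (hKc m) (abs_nonneg _)

lemma NKL.termA_rs (hM0 : 0 < M) (hPpos : ∀ m m', 0 < P m m')
    (hμ : ∀ m i, μ m i ∈ Set.Ioo (0:ℝ) 1) {b₁ b₂ : Fin M → ℝ}
    (hb₁ : IsBelief b₁) (hb₂ : IsBelief b₂)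
    (n : ℕ) (is : Fin (n+1) → Fin I) (rs : Fin (n+1) → Bool) :
    Qlaw P μ n b₁ is rs * l1 (NKL.post P μ n b₁ is rs) (NKL.post P μ n b₂ is rs)
      ≤ 2 * ∑ m, law P μ n m is rs * |b₁ m - b₂ m| := by
  have hQ1 := NKL.Qlaw_pos hM0 hPpos hμ hb₁ n is rs
  have hQ2 := NKL.Qlaw_pos hM0 hPpos hμ hb₂ n is rs
  have hQdiff : |Qlaw P μ n b₂ is rs - Qlaw P μ n b₁ is rs|
      ≤ ∑ m, law P μ n m is rs * |b₁ m - b₂ m| := by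
    unfold Qlaw
    rw [← Finset.sum_sub_distrib]
    refine le_trans (Finset.abs_sum_le_sum_abs _ _) ?_
    apply Finset.sum_le_sum
    intro m _
    rw [show b₂ m * law P μ n m is rs - b₁ m * law P μ n m is rs
      = law P μ n m is rs * (b₂ m - b₁ m) from by ring]
    rw [abs_mul, abs_of_pos (NKL.law_pos hM0 hPpos hμ n m is rs), abs_sub_comm]
  unfold l1 NKL.post
  rw [Finset.mul_sum]
  have hper : ∀ m, Qlaw P μ n b₁ is rs *
      |b₁ m * law P μ n m is rs / Qlaw P μ n b₁ is rs
        - b₂ m * law P μ n m is rs / Qlaw P μ n b₂ is rs|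
      ≤ law P μ n m is rs * |b₁ m - b₂ m|
        + b₂ m * law P μ n m is rs / Qlaw P μ n b₂ is rs
          * |Qlaw P μ n b₂ is rs - Qlaw P μ n b₁ is rs| := by
    intro m
    have hL := NKL.law_pos hM0 hPpos hμ n m is rs
    have key : Qlaw P μ n b₁ is rs *
        (b₁ m * law P μ n m is rs / Qlaw P μ n b₁ is rs
          - b₂ m * law P μ n m is rs / Qlaw P μ n b₂ is rs)
        = law P μ n m is rs * (b₁ m - b₂ m)
          + b₂ m * law P μ n m is rs / Qlaw P μ n b₂ is rs
            * (Qlaw P μ n b₂ is rs - Qlaw P μ n b₁ is rs) := by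
      field_simp
      ring
    calc Qlaw P μ n b₁ is rs *
        |b₁ m * law P μ n m is rs / Qlaw P μ n b₁ is rs
          - b₂ m * law P μ n m is rs / Qlaw P μ n b₂ is rs|
        = |Qlaw P μ n b₁ is rs *
            (b₁ m * law P μ n m is rs / Qlaw P μ n b₁ is rs
              - b₂ m * law P μ n m is rs / Qlaw P μ n b₂ is rs)| := by
          rw [abs_mul, abs_of_pos hQ1]
      _ = |law P μ n m is rs * (b₁ m - b₂ m)
            + b₂ m * law P μ n m is rs / Qlaw P μ n b₂ is rs
              * (Qlaw P μ n b₂ is rs - Qlaw P μ n b₁ is rs)| := by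
          rw [key]
      _ ≤ |law P μ n m is rs * (b₁ m - b₂ m)|
          + |b₂ m * law P μ n m is rs / Qlaw P μ n b₂ is rs
              * (Qlaw P μ n b₂ is rs - Qlaw P μ n b₁ is rs)| := abs_add_le _ _
      _ ≤ law P μ n m is rs * |b₁ m - b₂ m|
          + b₂ m * law P μ n m is rs / Qlaw P μ n b₂ is rs
            * |Qlaw P μ n b₂ is rs - Qlaw P μ n b₁ is rs| := by
          rw [abs_mul, abs_of_pos hL, abs_mul]
          apply add_le_add_right
          apply mul_le_mul_of_nonneg_right (le_of_eq (abs_of_nonneg ?_)) (abs_nonneg _)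
          exact div_nonneg (mul_nonneg (hb₂.1 m) hL.le) hQ2.le
  refine le_trans (Finset.sum_le_sum (fun m _ => hper m)) ?_
  rw [Finset.sum_add_distrib]
  have hb2sum : ∑ m, b₂ m * law P μ n m is rs / Qlaw P μ n b₂ is rs
      * |Qlaw P μ n b₂ is rs - Qlaw P μ n b₁ is rs|
      = |Qlaw P μ n b₂ is rs - Qlaw P μ n b₁ is rs| := by
    rw [← Finset.sum_mul, ← Finset.sum_div]
    show Qlaw P μ n b₂ is rs / Qlaw P μ n b₂ is rs * _ = _
    rw [div_self hQ2.ne', one_mul]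
  rw [hb2sum]
  linarith [hQdiff]

lemma NKL.arith1 (ε : ℝ) (hε0 : 0 < ε) (hεhalf : ε ≤ 1/2)
    (A : ℝ) (hA0 : 0 ≤ A) (hA : A*(1-ε) ≤ 1-2*ε) :
    2*(((1-2*ε)/(1-ε))*A) + ((1-2*ε) + A)
      ≤ (2*(1-ε)/ε) * (((1-2*ε)/(1-ε))*A) + (1 + (1-2*ε)/(1-ε))/2 := by
  have h1ε : (0:ℝ) < 1 - ε := by linarith
  have hden : (0:ℝ) < 2*ε*(1-ε) := by positivity
  have key : 0 ≤ A*(4 - 18*ε + 18*ε^2) + ε^2*(3-4*ε) := by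
    rcases le_or_gt 0 (4 - 18*ε + 18*ε^2) with hc | hc
    · have h1 := mul_nonneg hA0 hc
      nlinarith [mul_nonneg (mul_nonneg hε0.le hε0.le) (show (0:ℝ) ≤ 3-4*ε by linarith)]
    · have hAB : A ≤ (1-2*ε)/(1-ε) := by
        rw [le_div_iff₀ h1ε]; exact hA
      have h2 : ((1-2*ε)/(1-ε))*(4-18*ε+18*ε^2) ≤ A*(4-18*ε+18*ε^2) :=
        mul_le_mul_of_nonpos_right hAB hc.le
      have h31 : (0:ℝ) < 3*ε - 1 := by nlinarith
      have hS : (0:ℝ) ≤ 4 - 26*ε + 57*ε^2 - 43*ε^3 + 4*ε^4 := by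
        nlinarith [sq_nonneg (ε - 2/5), mul_nonneg h31.le (by linarith : (0:ℝ) ≤ 1 - 2*ε),
          mul_nonneg (mul_nonneg h31.le h31.le) (by linarith : (0:ℝ) ≤ 1 - 2*ε),
          mul_nonneg (mul_nonneg h31.le (by linarith : (0:ℝ) ≤ 1 - 2*ε))
            (by linarith : (0:ℝ) ≤ 1 - 2*ε),
          sq_nonneg (ε - 1/3), sq_nonneg (ε - 1/2), mul_pos hε0 hε0]
      have h3 : 0 ≤ ((1-2*ε)/(1-ε))*(4-18*ε+18*ε^2) + ε^2*(3-4*ε) := by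
        have hexp : ((1-2*ε)/(1-ε))*(4-18*ε+18*ε^2) + ε^2*(3-4*ε)
            = (4 - 26*ε + 57*ε^2 - 43*ε^3 + 4*ε^4)/(1-ε) := by
          field_simp
          ring
        rw [hexp]
        exact div_nonneg hS h1ε.le
      linarith
  have hLHS : 2*(((1-2*ε)/(1-ε))*A) + ((1-2*ε) + A)
      = (4*(1-2*ε)*ε*A + 2*ε*(1-ε)*(1-2*ε) + 2*ε*(1-ε)*A) / (2*ε*(1-ε)) := by
    field_simp
    ring
  have hRHS : (2*(1-ε)/ε) * (((1-2*ε)/(1-ε))*A) + (1 + (1-2*ε)/(1-ε))/2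
      = (4*(1-2*ε)*(1-ε)*A + ε*(2-3*ε)) / (2*ε*(1-ε)) := by
    field_simp
    ring
  rw [hLHS, hRHS]
  have hident : (4*(1-2*ε)*(1-ε)*A + ε*(2-3*ε))
      - (4*(1-2*ε)*ε*A + 2*ε*(1-ε)*(1-2*ε) + 2*ε*(1-ε)*A)
      = A*(4 - 18*ε + 18*ε^2) + ε^2*(3-4*ε) := by ring
  have poly : 4*(1-2*ε)*ε*A + 2*ε*(1-ε)*(1-2*ε) + 2*ε*(1-ε)*A
      ≤ 4*(1-2*ε)*(1-ε)*A + ε*(2-3*ε) := by linarith [key, hident]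
  exact (div_le_div_iff_of_pos_right hden).mpr poly

end Aux8


/-- the n-step belief transition kernel is Lipschitz in the initial
belief, uniformly over action sequences, with module at most `C₄ α^n + C₅`. -/
theorem nstep_kernel_lipschitz {M I : ℕ} (hM : 2 ≤ M) (hI : 0 < I)
    (P : Fin M → Fin M → ℝ) (hP : RowStochastic P)
    (μ : Fin M → Fin I → ℝ) (hμ : ∀ m i, μ m i ∈ Set.Ioo (0 : ℝ) 1)
    (ε : ℝ) (hε : IsLeast (Set.range fun q : Fin M × Fin M => P q.1 q.2) ε)
    (hε0 : 0 < ε) (hεhalf : ε ≤ 1 / 2)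
    (α C₄ C₅ : ℝ) (hα : α = (1 - 2 * ε) / (1 - ε))
    (hC₄ : C₄ = 2 / (1 - α)) (hC₅ : C₅ = (1 + α) / 2)
    (n : ℕ) (is : Fin (n + 1) → Fin I)
    (b₁ b₂ : Fin M → ℝ) (hb₁ : IsBelief b₁) (hb₂ : IsBelief b₂)
    (f : (Fin M → ℝ) → ℝ)
    (hfLip : ∀ b b', IsBelief b → IsBelief b' → |f b - f b'| ≤ l1 b b')
    (hfbdd : ∀ b, IsBelief b → |f b| ≤ 1) :
    |(∑ rs : Fin (n + 1) → Bool,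
        f (Hiter P μ (n + 1) b₁ is rs) * Qlaw P μ n b₁ is rs) -
     (∑ rs : Fin (n + 1) → Bool,
        f (Hiter P μ (n + 1) b₂ is rs) * Qlaw P μ n b₂ is rs)| ≤
      (C₄ * α ^ (n + 1) + C₅) * l1 b₁ b₂ := by
  subst hC₄ hC₅ hα
  have hεle : ∀ m m', ε ≤ P m m' := fun m m' => hε.2 ⟨(m, m'), rfl⟩
  have hM0 : 0 < M := lt_of_lt_of_le (by norm_num) hM
  have hPpos : ∀ m m', 0 < P m m' := fun m m' => lt_of_lt_of_le hε0 (hεle m m')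
  have hεub : ∀ m m', P m m' ≤ 1 - ε := by
    intro m m'
    haveI : Nontrivial (Fin M) := Fin.nontrivial_iff_two_le.mpr hM
    obtain ⟨m'', hne⟩ := exists_ne m'
    have hpair : P m m' + P m m'' ≤ ∑ k, P m k := by
      have hsub := Finset.sum_le_sum_of_subset_of_nonneg
        (Finset.subset_univ ({m', m''} : Finset (Fin M))) (fun k _ _ => hP.1 m k)
      rwa [Finset.sum_pair (Ne.symm hne)] at hsub
    have h2 := hεle m m''
    rw [hP.2 m] at hpair
    linarith
  have h1ε : (0:ℝ) < 1 - ε := by linarith [lt_of_le_of_lt hεhalf (show (1:ℝ)/2 < 1 by norm_num)]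
  have h2ε : (0:ℝ) ≤ 1 - 2*ε := by linarith
  have hα0 : (0:ℝ) ≤ (1 - 2*ε)/(1 - ε) := div_nonneg h2ε h1ε.le
  have hα1 : (1 - 2*ε)/(1 - ε) < 1 := by
    rw [div_lt_one h1ε]; linarith
  have h1α : (0:ℝ) < 1 - (1 - 2*ε)/(1 - ε) := by linarith
  have hα0' : (0:ℝ) ≤ (1 - 2 * ε)/(1 - ε) := hα0
  have hl1nn : 0 ≤ l1 b₁ b₂ := NKL.l1_nonneg b₁ b₂
  -- decomposition
  have hdecomp : (∑ rs : Fin (n + 1) → Bool,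
        f (Hiter P μ (n + 1) b₁ is rs) * Qlaw P μ n b₁ is rs) -
      (∑ rs : Fin (n + 1) → Bool,
        f (Hiter P μ (n + 1) b₂ is rs) * Qlaw P μ n b₂ is rs)
      = (∑ rs : Fin (n + 1) → Bool,
          (f (Hiter P μ (n + 1) b₁ is rs) - f (Hiter P μ (n + 1) b₂ is rs))
            * Qlaw P μ n b₁ is rs)
        + ∑ rs : Fin (n + 1) → Bool,
            f (Hiter P μ (n + 1) b₂ is rs) * (Qlaw P μ n b₁ is rs - Qlaw P μ n b₂ is rs) := by
    rw [← Finset.sum_add_distrib, ← Finset.sum_sub_distrib]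
    apply Finset.sum_congr rfl
    intro rs _
    ring
  rw [hdecomp]
  refine le_trans (abs_add_le _ _) ?_
  -- Term A
  have hTA : |∑ rs : Fin (n + 1) → Bool,
      (f (Hiter P μ (n + 1) b₁ is rs) - f (Hiter P μ (n + 1) b₂ is rs))
        * Qlaw P μ n b₁ is rs|
      ≤ 2 * ((1 - 2*ε)/(1 - ε))^(n+1) * l1 b₁ b₂ := by
    refine le_trans (Finset.abs_sum_le_sum_abs _ _) ?_
    have hper : ∀ rs : Fin (n+1) → Bool,
        |(f (Hiter P μ (n + 1) b₁ is rs) - f (Hiter P μ (n + 1) b₂ is rs))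
          * Qlaw P μ n b₁ is rs|
        ≤ ((1 - 2*ε)/(1 - ε))^(n+1)
            * (2 * ∑ m, law P μ n m is rs * |b₁ m - b₂ m|) := by
      intro rs
      have hQ1 := NKL.Qlaw_pos hM0 hPpos hμ hb₁ n is rs
      rw [abs_mul, abs_of_pos hQ1]
      calc |f (Hiter P μ (n + 1) b₁ is rs) - f (Hiter P μ (n + 1) b₂ is rs)|
            * Qlaw P μ n b₁ is rs
          ≤ (((1 - 2*ε)/(1 - ε))^(n+1)
              * l1 (NKL.post P μ n b₁ is rs) (NKL.post P μ n b₂ is rs))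
            * Qlaw P μ n b₁ is rs := by
            apply mul_le_mul_of_nonneg_right _ hQ1.le
            refine le_trans (hfLip _ _ (NKL.Hiter_isBelief hP hμ (n+1) hb₁ is rs)
              (NKL.Hiter_isBelief hP hμ (n+1) hb₂ is rs)) ?_
            exact NKL.core hM hP hμ hε0 hεle hεub hεhalf n is rs b₁ b₂ hb₁ hb₂
        _ = ((1 - 2*ε)/(1 - ε))^(n+1)
            * (Qlaw P μ n b₁ is rs
              * l1 (NKL.post P μ n b₁ is rs) (NKL.post P μ n b₂ is rs)) := by ring
        _ ≤ ((1 - 2*ε)/(1 - ε))^(n+1)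
            * (2 * ∑ m, law P μ n m is rs * |b₁ m - b₂ m|) := by
            apply mul_le_mul_of_nonneg_left _ (pow_nonneg hα0 _)
            exact NKL.termA_rs hM0 hPpos hμ hb₁ hb₂ n is rs
    refine le_trans (Finset.sum_le_sum fun rs _ => hper rs) ?_
    rw [← Finset.mul_sum]
    have hsum : ∑ rs : Fin (n+1) → Bool, (2 * ∑ m, law P μ n m is rs * |b₁ m - b₂ m|)
        = 2 * l1 b₁ b₂ := by
      rw [← Finset.mul_sum]
      congr 1
      rw [Finset.sum_comm]
      unfold l1
      apply Finset.sum_congr rfl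
      intro m _
      rw [← Finset.sum_mul, NKL.law_sum_one hP.2 n m is, one_mul]
    rw [hsum]
    apply le_of_eq
    ring
  -- Term B as an inner product against the signed measure b₁ - b₂
  have hd0 : ∑ m, (b₁ m - b₂ m) = 0 := by
    rw [Finset.sum_sub_distrib, hb₁.2, hb₂.2, sub_self]
  have hTBform : (∑ rs : Fin (n + 1) → Bool,
        f (Hiter P μ (n + 1) b₂ is rs) * (Qlaw P μ n b₁ is rs - Qlaw P μ n b₂ is rs))
      = ∑ m, (b₁ m - b₂ m)
          * ∑ rs : Fin (n + 1) → Bool, f (Hiter P μ (n + 1) b₂ is rs) * law P μ n m is rs := by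
    calc ∑ rs : Fin (n + 1) → Bool,
          f (Hiter P μ (n + 1) b₂ is rs) * (Qlaw P μ n b₁ is rs - Qlaw P μ n b₂ is rs)
        = ∑ rs : Fin (n + 1) → Bool, ∑ m, (b₁ m - b₂ m)
            * (f (Hiter P μ (n + 1) b₂ is rs) * law P μ n m is rs) := by
          apply Finset.sum_congr rfl
          intro rs _
          unfold Qlaw
          rw [← Finset.sum_sub_distrib, Finset.mul_sum]
          apply Finset.sum_congr rfl
          intro m _
          ring
      _ = ∑ m, ∑ rs : Fin (n + 1) → Bool, (b₁ m - b₂ m)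
            * (f (Hiter P μ (n + 1) b₂ is rs) * law P μ n m is rs) := Finset.sum_comm
      _ = ∑ m, (b₁ m - b₂ m)
            * ∑ rs : Fin (n + 1) → Bool, f (Hiter P μ (n + 1) b₂ is rs) * law P μ n m is rs := by
          apply Finset.sum_congr rfl
          intro m _
          rw [Finset.mul_sum]
  rw [hTBform]
  -- split on n for the oscillation bound
  cases n with
  | zero =>
    have hosc : ∀ m mt : Fin M,
        |(∑ rs : Fin 1 → Bool, f (Hiter P μ 1 b₂ is rs) * law P μ 0 m is rs)
          - ∑ rs : Fin 1 → Bool, f (Hiter P μ 1 b₂ is rs) * law P μ 0 mt is rs|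
        ≤ 2*((1-2*ε)/(1-ε)) :=
      fun m mt => NKL.osc0 hM hP hμ hε0 hεle hεhalf is hb₂ hfLip m mt
    have hTB := NKL.center hM0 (fun m => b₁ m - b₂ m)
      (fun m => ∑ rs : Fin 1 → Bool, f (Hiter P μ 1 b₂ is rs) * law P μ 0 m is rs)
      hd0 hosc
    have hKhalf : (2*((1-2*ε)/(1-ε)))/2 = (1-2*ε)/(1-ε) := by ring
    rw [hKhalf] at hTB
    have hl1eq : ∑ m, |b₁ m - b₂ m| = l1 b₁ b₂ := rfl
    rw [hl1eq] at hTB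
    have hcoef : 2 * ((1 - 2*ε)/(1 - ε))^(0+1) + (1-2*ε)/(1-ε)
        ≤ 2 / (1 - (1 - 2 * ε) / (1 - ε)) * ((1 - 2 * ε) / (1 - ε)) ^ (0 + 1)
          + (1 + (1 - 2 * ε) / (1 - ε)) / 2 := by
      rw [pow_one]
      have h24 : (2:ℝ) ≤ 2 / (1 - (1 - 2 * ε) / (1 - ε)) := by
        rw [le_div_iff₀ h1α]
        nlinarith
      have ht1 : 2 * ((1 - 2*ε)/(1 - ε)) ≤ (2 / (1 - (1 - 2 * ε) / (1 - ε))) * ((1 - 2*ε)/(1 - ε)) :=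
        mul_le_mul_of_nonneg_right h24 hα0
      have ht2 : (1 - 2*ε)/(1-ε) ≤ (1 + (1 - 2 * ε) / (1 - ε)) / 2 := by linarith
      linarith
    have hfinal := mul_le_mul_of_nonneg_right hcoef hl1nn
    nlinarith [hTA, hTB, hfinal]
  | succ n' =>
    have hosc : ∀ m mt : Fin M,
        |(∑ rs : Fin (n'+2) → Bool, f (Hiter P μ (n'+2) b₂ is rs) * law P μ (n'+1) m is rs)
          - ∑ rs : Fin (n'+2) → Bool, f (Hiter P μ (n'+2) b₂ is rs) * law P μ (n'+1) mt is rs|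
        ≤ (2 - 4*ε) + 2*((1-2*ε)/(1-ε))^(n'+1) :=
      fun m mt => NKL.oscn hM hP hμ hε0 hεle hεub hεhalf n' is hb₂ hfLip hfbdd m mt
    have hTB := NKL.center hM0 (fun m => b₁ m - b₂ m)
      (fun m => ∑ rs : Fin (n'+2) → Bool, f (Hiter P μ (n'+2) b₂ is rs) * law P μ (n'+1) m is rs)
      hd0 hosc
    have hl1eq : ∑ m, |b₁ m - b₂ m| = l1 b₁ b₂ := rfl
    rw [hl1eq] at hTB
    have hKhalf : ((2 - 4*ε) + 2*((1-2*ε)/(1-ε))^(n'+1))/2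
        = (1 - 2*ε) + ((1-2*ε)/(1-ε))^(n'+1) := by ring
    rw [hKhalf] at hTB
    -- arithmetic
    have hApow : ((1-2*ε)/(1-ε))^(n'+1) * (1-ε) ≤ 1 - 2*ε := by
      have hle : ((1-2*ε)/(1-ε))^(n'+1) ≤ ((1-2*ε)/(1-ε))^1 :=
        pow_le_pow_of_le_one hα0 hα1.le (by omega)
      rw [pow_one] at hle
      calc ((1-2*ε)/(1-ε))^(n'+1) * (1-ε) ≤ ((1-2*ε)/(1-ε)) * (1-ε) :=
            mul_le_mul_of_nonneg_right hle h1ε.le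
        _ = 1 - 2*ε := div_mul_cancel₀ _ h1ε.ne'
    have harith := NKL.arith1 ε hε0 hεhalf (((1-2*ε)/(1-ε))^(n'+1))
      (pow_nonneg hα0 _) hApow
    have hC4eq : 2 / (1 - (1 - 2 * ε) / (1 - ε)) = 2*(1-ε)/ε := by
      have h1 : 1 - (1 - 2 * ε) / (1 - ε) = ε/(1-ε) := by
        field_simp
        ring
      rw [h1, div_div_eq_mul_div]
    have hpow2 : ((1-2*ε)/(1-ε))^(n'+1+1) = ((1-2*ε)/(1-ε)) * ((1-2*ε)/(1-ε))^(n'+1) :=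
      pow_succ' _ _
    have hcoef : 2 * ((1 - 2*ε)/(1 - ε))^(n'+1+1)
          + ((1 - 2*ε) + ((1-2*ε)/(1-ε))^(n'+1))
        ≤ 2 / (1 - (1 - 2 * ε) / (1 - ε)) * ((1 - 2 * ε) / (1 - ε)) ^ (n'+1+1)
          + (1 + (1 - 2 * ε) / (1 - ε)) / 2 := by
      rw [hC4eq, hpow2]
      exact harith
    have hfinal := mul_le_mul_of_nonneg_right hcoef hl1nn
    nlinarith [hTA, hTB, hfinal]
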